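/- arXiv:2602.10466 — 2 statements merged into one kernel-verified Lean document; each statement's English description precedes it below -/
import Mathlib

section
/- Let n0 be a natural number, k a natural number, and f = f_k(n0). If T^k(n0) is even, then T^{k+1}(n0 + 2^k) = (3(T^k(n0) + 3^f) + 1)/2; and if T^k(n0) is odd, then T^{k+1}(n0 + 2^k) = (T^k(n0) + 3^f)/2. -/
/-- The modified Collatz function. -/
def T (n : ℕ) : ℕ := if n % 2 = 0 then n / 2 else (3 * n + 1) / 2

/-- `f k m` is the number of indices `0 ≤ j < k` with `T^[j] m` odd. -/
def f (k m : ℕ) : ℕ := ((Finset.range k).filter (fun j => Odd (T^[j] m))).card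

lemma T_add_two_mul (n m : ℕ) :
    T (n + 2 * m) = T n + (if n % 2 = 0 then m else 3 * m) := by
  simp only [T]
  have h : (n + 2 * m) % 2 = n % 2 := by omega
  rw [h]
  split_ifs <;> omega

lemma f_succ (k n : ℕ) :
    f (k + 1) n = f k n + (if Odd (T^[k] n) then 1 else 0) := by
  simp only [f, Finset.range_add_one, Finset.filter_insert]
  split_ifs with h
  · rw [Finset.card_insert_of_notMem (by simp)]
  · omega

lemma key (k : ℕ) : ∀ n0 a : ℕ, T^[k] (n0 + a * 2 ^ k) = T^[k] n0 + a * 3 ^ (f k n0) := by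
  induction k with
  | zero => intro n0 a; simp [f]
  | succ k ih =>
    intro n0 a
    have h1 : n0 + a * 2 ^ (k + 1) = n0 + (2 * a) * 2 ^ k := by ring_nf
    rw [h1, Function.iterate_succ_apply', Function.iterate_succ_apply', ih,
      f_succ]
    have h2 : T^[k] n0 + 2 * a * 3 ^ f k n0 = T^[k] n0 + 2 * (a * 3 ^ f k n0) := by ring
    rw [h2, T_add_two_mul]
    rcases Nat.even_or_odd (T^[k] n0) with he | ho
    · rw [if_pos (Nat.even_iff.mp he), if_neg (by simpa [Nat.odd_iff] using Nat.even_iff.mp he)]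
      ring_nf
    · rw [if_neg (by simpa [Nat.odd_iff] using Nat.odd_iff.mp ho), if_pos ho]
      ring_nf

theorem iterate_succ_add_pow (n0 k : ℕ) :
    (Even (T^[k] n0) →
      T^[k + 1] (n0 + 2 ^ k) = (3 * (T^[k] n0 + 3 ^ (f k n0)) + 1) / 2) ∧
    (Odd (T^[k] n0) →
      T^[k + 1] (n0 + 2 ^ k) = (T^[k] n0 + 3 ^ (f k n0)) / 2) := by
  have h := key k n0 1
  rw [one_mul] at h
  rw [Function.iterate_succ_apply', show n0 + 2 ^ k = n0 + 1 * 2 ^ k by ring, key k n0 1,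
    one_mul]
  have hodd : Odd (3 ^ (f k n0)) := Odd.pow (by decide)
  constructor
  · intro he
    have : (T^[k] n0 + 3 ^ (f k n0)) % 2 = 1 := by
      rw [Nat.even_iff] at he; rw [Nat.odd_iff] at hodd; omega
    simp [T, this]
  · intro ho
    have : (T^[k] n0 + 3 ^ (f k n0)) % 2 = 0 := by
      rw [Nat.odd_iff] at ho; rw [Nat.odd_iff] at hodd; omega
    simp [T, this]
end

section
/- Suppose m is a positive odd integer such that T^ℓ(m) is odd for 0 ≤ ℓ < L for some L ≥ 1, and T^L(m) and T^{L+1}(m) are both even. Then the trajectory of m under T meets the trajectory of (m−1)/2; specifically, there exist j, j' such that T^j(m) = T^{j'}((m−1)/2). -/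
lemma T_even {n : ℕ} (h : n % 2 = 0) : T n = n / 2 := by simp [T, h]

lemma T_odd {n : ℕ} (h : n % 2 = 1) : T n = (3 * n + 1) / 2 := by simp [T, h]

theorem odd_even_even_sieve (m L : ℕ) (hm : 1 ≤ m) (hL : 1 ≤ L)
    (hodd : ∀ l < L, Odd (T^[l] m))
    (he1 : Even (T^[L] m)) (he2 : Even (T^[L + 1] m)) :
    ∃ j j' : ℕ, T^[j] m = T^[j'] ((m - 1) / 2) := by
  set n := (m - 1) / 2 with hn
  have hmodd : m % 2 = 1 := Nat.odd_iff.mp (by simpa using hodd 0 hL)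
  have hm2 : m = 2 * n + 1 := by omega
  have key : ∀ l, l < L → T^[l + 1] m = 3 * T^[l] n + 2 := by
    intro l hl
    induction l with
    | zero =>
      rw [show (0 : ℕ) + 1 = 1 from rfl, Function.iterate_one, T_odd hmodd]
      simp only [Function.iterate_zero, id]
      omega
    | succ k ih =>
      have hk : k < L := by omega
      have ih' := ih hk
      have hko : (T^[k + 1] m) % 2 = 1 := Nat.odd_iff.mp (hodd (k + 1) hl)
      have hno : (T^[k] n) % 2 = 1 := by omega
      rw [Function.iterate_succ_apply', Function.iterate_succ_apply' T k n, ih',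
        T_odd (by omega), T_odd hno]
      omega
  obtain ⟨K, rfl⟩ : ∃ K, L = K + 1 := ⟨L - 1, by omega⟩
  have h1 := key K (by omega)
  set a := T^[K] n with ha
  have he1' : (T^[K + 1] m) % 2 = 0 := Nat.even_iff.mp he1
  have hae : a % 2 = 0 := by omega
  have h2 : T^[K + 2] m = 3 * (a / 2) + 1 := by
    rw [show K + 2 = (K + 1) + 1 from rfl, Function.iterate_succ_apply', h1,
      T_even (by omega)]
    omega
  have he2' : (T^[K + 2] m) % 2 = 0 := Nat.even_iff.mp (by simpa using he2)
  have hao : (a / 2) % 2 = 1 := by omega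
  refine ⟨K + 3, K + 2, ?_⟩
  rw [show K + 3 = (K + 2) + 1 from rfl, Function.iterate_succ_apply', h2,
    T_even (by omega), show K + 2 = (K + 1) + 1 from rfl,
    Function.iterate_succ_apply', Function.iterate_succ_apply' T K n, ← ha,
    T_even hae, T_odd hao]
end
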